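/- For every n ≥ 2, let G = DihedralGroup (2^(n-1)) be the dihedral group of order 2^n, let H = Subgroup.zpowers (r 2) and K = Subgroup.zpowers (sr 0). Then the set of double cosets H\G/K has exactly two elements, i.e. Nat.card (Doset.Quotient (H : Set G) (K : Set G)) = 2. -/

import Mathlib

/-!
STATEMENT 7: For `n ≥ 2`, in the dihedral group `G = DihedralGroup (2^(n-1))`
of order `2^n`, with `H = ⟨r 2⟩` and `K = ⟨sr 0⟩`, the double coset space
`H\G/K` has exactly two elements.
-/

open DihedralGroup

section Aux

variable {m : ℕ} [NeZero m]

private lemma neg_zmod2 : ∀ a : ZMod 2, -a = a := by decide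

private lemma add_self_zmod2 : ∀ a : ZMod 2, a + a = 0 := by decide

omit [NeZero m] in
private lemma r_pow_aux (a : ZMod m) (k : ℕ) : (r a) ^ k = r ((k : ZMod m) * a) := by
  induction k with
  | zero => simp
  | succ k ih =>
    rw [pow_succ, ih, r_mul_r]
    congr 1
    push_cast
    ring

omit [NeZero m] in
private lemma r_inv_aux (a : ZMod m) : (r a)⁻¹ = r (-a) := rfl

omit [NeZero m] in
private lemma r_zpow_aux (a : ZMod m) (z : ℤ) : (r a) ^ z = r ((z : ZMod m) * a) := by
  cases z with
  | ofNat k =>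
    rw [Int.ofNat_eq_natCast, zpow_natCast, r_pow_aux]
    norm_cast
  | negSucc k =>
    rw [zpow_negSucc, r_pow_aux, r_inv_aux]
    congr 1
    push_cast
    ring

omit [NeZero m] in
private lemma sr_zero_zpow_aux (z : ℤ) :
    (sr (0 : ZMod m)) ^ z = 1 ∨ (sr (0 : ZMod m)) ^ z = sr 0 := by
  have h2 : (sr (0 : ZMod m)) ^ (2 : ℤ) = 1 := by
    rw [zpow_two, sr_mul_sr, sub_self, one_def]
  rcases Int.even_or_odd z with ⟨q, hq⟩ | ⟨q, hq⟩
  · left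
    rw [hq, ← two_mul, zpow_mul, h2, one_zpow]
  · right
    rw [hq, zpow_add, zpow_mul, h2, one_zpow, one_mul, zpow_one]

omit [NeZero m] in
private lemma H_cases {x : DihedralGroup m} (hx : x ∈ Subgroup.zpowers (r (2 : ZMod m))) :
    ∃ c : ZMod m, x = r (2 * c) := by
  obtain ⟨z, hz⟩ := Subgroup.mem_zpowers_iff.1 hx
  refine ⟨(z : ZMod m), ?_⟩
  rw [← hz, r_zpow_aux]
  congr 1
  ring

omit [NeZero m] in
private lemma K_cases {k : DihedralGroup m} (hk : k ∈ Subgroup.zpowers (sr (0 : ZMod m))) :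
    k = 1 ∨ k = sr 0 := by
  obtain ⟨z, hz⟩ := Subgroup.mem_zpowers_iff.1 hk
  rw [← hz]
  exact sr_zero_zpow_aux z

/-- the parity map -/
private def phi (hm : 2 ∣ m) : DihedralGroup m → ZMod 2 := fun x =>
  match x with
  | r i => ZMod.castHom hm (ZMod 2) i
  | sr i => ZMod.castHom hm (ZMod 2) i

private lemma phi_two_mul (hm : 2 ∣ m) (c : ZMod m) :
    ZMod.castHom hm (ZMod 2) (2 * c) = 0 := by
  have h2 : (2 : ZMod m) = ((2 : ℕ) : ZMod m) := by norm_cast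
  rw [map_mul, h2, map_natCast, ZMod.natCast_self, zero_mul]

private lemma phi_const (hm : 2 ∣ m) (x y : DihedralGroup m)
    (hx : x ∈ Subgroup.zpowers (r (2 : ZMod m)))
    (k : DihedralGroup m) (hk : k ∈ Subgroup.zpowers (sr (0 : ZMod m))) :
    phi hm (x * y * k) = phi hm y := by
  obtain ⟨c, rfl⟩ := H_cases hx
  rcases K_cases hk with rfl | rfl <;> cases y <;>
    simp [phi, map_add, map_sub, map_neg, phi_two_mul hm, neg_zmod2, zero_sub, sub_zero,
      sub_eq_add_neg]

private lemma mem_H (hm : 2 ∣ m) (c : ZMod m) :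
    r (2 * c) ∈ Subgroup.zpowers (r (2 : ZMod m)) := by
  refine ⟨(c.val : ℤ), ?_⟩
  show (r (2 : ZMod m)) ^ ((c.val : ℤ)) = r (2 * c)
  rw [r_zpow_aux]
  congr 1
  push_cast
  rw [ZMod.natCast_val, ZMod.cast_id]
  ring

private lemma exists_half (hm : 2 ∣ m) (d : ZMod m)
    (hd : ZMod.castHom hm (ZMod 2) d = 0) : ∃ c : ZMod m, d = 2 * c := by
  have hv : ((d.val : ℕ) : ZMod 2) = 0 := by
    rwa [ZMod.castHom_apply, ← ZMod.natCast_val] at hd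
  obtain ⟨c, hc⟩ := (ZMod.natCast_eq_zero_iff _ _).1 hv
  refine ⟨(c : ZMod m), ?_⟩
  have hdd : ((d.val : ℕ) : ZMod m) = d := by rw [ZMod.natCast_val, ZMod.cast_id]
  rw [← hdd, hc]
  push_cast
  ring

private lemma phi_rel (hm : 2 ∣ m) (x y : DihedralGroup m) (hxy : phi hm x = phi hm y) :
    ∃ h ∈ Subgroup.zpowers (r (2 : ZMod m)), ∃ k ∈ Subgroup.zpowers (sr (0 : ZMod m)),
      y = h * x * k := by
  have hK1 : (1 : DihedralGroup m) ∈ Subgroup.zpowers (sr (0 : ZMod m)) := one_mem _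
  have hKs : sr (0 : ZMod m) ∈ Subgroup.zpowers (sr (0 : ZMod m)) := Subgroup.mem_zpowers _
  cases x with
  | r i =>
    cases y with
    | r j =>
      simp only [phi] at hxy
      obtain ⟨c, hc⟩ := exists_half hm (j - i) (by rw [map_sub, hxy, sub_self])
      refine ⟨r (2 * c), mem_H hm c, 1, hK1, ?_⟩
      rw [mul_one, r_mul_r]
      congr 1
      linear_combination hc
    | sr j =>
      simp only [phi] at hxy
      obtain ⟨c, hc⟩ := exists_half hm (-j - i) (by
        rw [map_sub, map_neg, neg_zmod2, ← hxy, sub_self])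
      refine ⟨r (2 * c), mem_H hm c, sr 0, hKs, ?_⟩
      rw [r_mul_r, r_mul_sr]
      congr 1
      linear_combination -hc
  | sr i =>
    cases y with
    | r j =>
      simp only [phi] at hxy
      obtain ⟨c, hc⟩ := exists_half hm (j + i) (by
        rw [map_add, ← hxy, add_self_zmod2])
      refine ⟨r (2 * c), mem_H hm c, sr 0, hKs, ?_⟩
      rw [r_mul_sr, sr_mul_sr]
      congr 1
      linear_combination hc
    | sr j =>
      simp only [phi] at hxy
      obtain ⟨c, hc⟩ := exists_half hm (i - j) (by rw [map_sub, hxy, sub_self])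
      refine ⟨r (2 * c), mem_H hm c, 1, hK1, ?_⟩
      rw [mul_one, r_mul_sr]
      congr 1
      linear_combination -hc

private lemma phi_r_val (hm : 2 ∣ m) (a : ZMod 2) :
    phi hm (r ((a.val : ZMod m))) = a := by
  show ZMod.castHom hm (ZMod 2) ((a.val : ZMod m)) = a
  rw [map_natCast, ZMod.natCast_val, ZMod.cast_id]

private lemma aux_card (hm : 2 ∣ m) :
    Nat.card (DoubleCoset.Quotient
      ((Subgroup.zpowers (r (2 : ZMod m))) : Set (DihedralGroup m))
      ((Subgroup.zpowers (sr (0 : ZMod m))) : Set (DihedralGroup m))) = 2 := by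
  set H := Subgroup.zpowers (r (2 : ZMod m))
  set K := Subgroup.zpowers (sr (0 : ZMod m))
  have key : ∀ a b : DihedralGroup m, DoubleCoset.setoid (H : Set _) (K : Set _) a b →
      phi hm a = phi hm b := by
    intro a b hab
    obtain ⟨h, hh, k, hk, rfl⟩ := (DoubleCoset.rel_iff).1 hab
    exact (phi_const hm h a hh k hk).symm
  have e : DoubleCoset.Quotient (H : Set (DihedralGroup m)) (K : Set (DihedralGroup m)) ≃ ZMod 2 :=
    { toFun := Quotient.lift (phi hm) key
      invFun := fun p => DoubleCoset.mk H K (r ((p.val : ZMod m)))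
      left_inv := by
        intro q
        induction q using Quotient.inductionOn with
        | h x =>
          show DoubleCoset.mk H K _ = DoubleCoset.mk H K x
          rw [DoubleCoset.eq]
          exact phi_rel hm _ x (by rw [phi_r_val]; rfl)
      right_inv := fun p => phi_r_val hm p }
  rw [Nat.card_congr e, Nat.card_zmod]

end Aux

theorem dihedral_double_coset_card (n : ℕ) (hn : 2 ≤ n) :
    Nat.card (DoubleCoset.Quotient
      ((Subgroup.zpowers (r (2 : ZMod (2 ^ (n - 1))))) : Set (DihedralGroup (2 ^ (n - 1))))
      ((Subgroup.zpowers (sr (0 : ZMod (2 ^ (n - 1))))) : Set (DihedralGroup (2 ^ (n - 1))))) = 2 := by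
  have : NeZero (2 ^ (n - 1)) := ⟨pow_ne_zero _ two_ne_zero⟩
  exact aux_card (dvd_pow_self 2 (show n - 1 ≠ 0 by omega))
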